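/- With g_{ab}=δ_{a,b'} and det g = (−1)^{⌊N/2⌋}, the q-epsilon tensor satisfies the q-determinant identity: Σ_{i_1,...,i_N} ε_q^{i_1...i_N} g_{1 i_1} ⋯ g_{N i_N} = (−1)^{⌊N/2⌋}. Equivalently, ε_q^{N, N−1, ..., 1} = (−1)^{⌊N/2⌋} ε_q^{1,2,...,N}. -/

import Mathlib

/-- The q-epsilon tensor on `N` letters: `ε_q^{1...N} = 1`, it vanishes on
tuples with a repeated index, and swapping two adjacent entries `...ab...`
produces a factor `−q(a,b)` (so `ε_q^{...ab...} = −q(a,b) ε_q^{...ba...}`).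
Explicitly, on an injective tuple it is the product over all inversions of
the corresponding factors `−q`. -/
def epsQ {N : ℕ} (q : Fin N → Fin N → ℂ) (i : Fin N → Fin N) : ℂ :=
  if Function.Injective i then
    ∏ p ∈ Finset.univ.filter (fun p : Fin N × Fin N => p.1 < p.2 ∧ i p.2 < i p.1),
      (-(q (i p.1) (i p.2)))
  else 0

/-- with `g_{ab} = δ_{a,b'}` (primed index `b' = Fin.rev b`) and
`det g = (−1)^⌊N/2⌋`, the q-determinant identity
`Σ ε_q^{i_1...i_N} g_{1 i_1} ⋯ g_{N i_N} = (−1)^⌊N/2⌋`; equivalently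
`ε_q^{N,N−1,...,1} = (−1)^⌊N/2⌋ ε_q^{1,2,...,N}`. -/
lemma sum_range_parity (N : ℕ) : (∑ i ∈ Finset.range N, i) % 2 = (N / 2) % 2 := by
  induction N with
  | zero => simp
  | succ n ih => rw [Finset.sum_range_succ, Nat.add_mod, ih]; omega

lemma card_upper (N : ℕ) : (Finset.univ.filter fun p : Fin N × Fin N => p.1 < p.2).card
    = ∑ i ∈ Finset.range N, i := by
  rw [Finset.card_filter, Fintype.sum_prod_type_right, ← Fin.sum_univ_eq_sum_range (fun i => i)]
  refine Finset.sum_congr rfl fun b _ => ?_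
  rw [← Finset.card_filter]
  have : (Finset.univ.filter fun a : Fin N => a < b) = Finset.Iio b := by ext a; simp
  rw [this, Fin.card_Iio]

lemma epsQ_id {N : ℕ} (q : Fin N → Fin N → ℂ) : epsQ q (fun k => k) = 1 := by
  have hinj : Function.Injective (fun k : Fin N => k) := fun a b h => h
  rw [epsQ, if_pos hinj]
  have : (Finset.univ.filter fun p : Fin N × Fin N => p.1 < p.2 ∧ p.2 < p.1) = ∅ := by
    ext p
    simp only [Finset.mem_filter, Finset.mem_univ, true_and, Finset.notMem_empty, iff_false]
    rintro ⟨a, b⟩; exact absurd (a.trans b) (lt_irrefl _)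
  rw [this, Finset.prod_empty]

lemma epsQ_rev {N : ℕ} (q : Fin N → Fin N → ℂ)
    (h1 : ∀ a, q a a = 1)
    (h2 : ∀ a b, q a b * q b a = 1)
    (h3 : ∀ a b, q a b * q a (Fin.rev b) = 1)
    (h4 : ∀ a b, q a b = q (Fin.rev a) (Fin.rev b)) :
    epsQ q (fun k => Fin.rev k) = (-1 : ℂ) ^ (N / 2) := by
  have hinj : Function.Injective (fun k : Fin N => Fin.rev k) := fun a b h => Fin.rev_injective h
  rw [epsQ, if_pos hinj]
  have hf : (Finset.univ.filter fun p : Fin N × Fin N => p.1 < p.2 ∧ Fin.rev p.2 < Fin.rev p.1)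
      = Finset.univ.filter fun p : Fin N × Fin N => p.1 < p.2 := by
    ext p; simp [Fin.rev_lt_rev]
  rw [hf]
  have step1 : ∀ p : Fin N × Fin N, (-(q (Fin.rev p.1) (Fin.rev p.2))) = (-1) * q p.1 p.2 := by
    intro p; rw [← h4]; ring
  rw [Finset.prod_congr rfl (fun p _ => step1 p), Finset.prod_mul_distrib, Finset.prod_const]
  have hq : ∏ p ∈ (Finset.univ.filter fun p : Fin N × Fin N => p.1 < p.2), q p.1 p.2 = 1 := by
    refine Finset.prod_involution (fun p _ => (Fin.rev p.2, Fin.rev p.1)) ?_ ?_ ?_ ?_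
    · intro p hp
      have : q (Fin.rev p.2) (Fin.rev p.1) = q p.2 p.1 := (h4 p.2 p.1).symm
      rw [this]; exact h2 p.1 p.2
    · intro p hp hne heq
      have e1 : Fin.rev p.2 = p.1 := congrArg Prod.fst heq
      apply hne
      rw [← e1]
      have h5 := h3 p.2.rev p.2.rev
      rw [h1, one_mul, Fin.rev_rev] at h5
      exact h5
    · intro p hp
      simp only [Finset.mem_filter, Finset.mem_univ, true_and] at hp ⊢
      exact Fin.rev_lt_rev.mpr hp
    · intro p hp; simp [Fin.rev_rev]
  rw [hq, mul_one, card_upper]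
  rw [neg_one_pow_eq_pow_mod_two, sum_range_parity, ← neg_one_pow_eq_pow_mod_two]

theorem epsQ_det {N : ℕ} (q : Fin N → Fin N → ℂ)
    (h1 : ∀ a, q a a = 1)
    (h2 : ∀ a b, q a b * q b a = 1)
    (h3 : ∀ a b, q a b * q a (Fin.rev b) = 1)
    (h4 : ∀ a b, q a b = q (Fin.rev a) (Fin.rev b)) :
    (∑ i : Fin N → Fin N,
        epsQ q i * ∏ k, (if i k = Fin.rev k then (1 : ℂ) else 0))
      = (-1 : ℂ) ^ (N / 2) ∧
    epsQ q (fun k => Fin.rev k) = (-1 : ℂ) ^ (N / 2) * epsQ q (fun k => k) := by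
  have key := epsQ_rev q h1 h2 h3 h4
  constructor
  · rw [Finset.sum_eq_single (fun k => Fin.rev k)]
    · rw [key]
      have : ∀ k : Fin N, (if Fin.rev k = Fin.rev k then (1 : ℂ) else 0) = 1 := by
        intro k; rw [if_pos rfl]
      rw [Finset.prod_congr rfl (fun k _ => this k), Finset.prod_const_one, mul_one]
    · intro i _ hi
      obtain ⟨k, hk⟩ : ∃ k, i k ≠ Fin.rev k := by
        by_contra h
        push_neg at h
        exact hi (funext h)
      have hz : (∏ k : Fin N, if i k = Fin.rev k then (1:ℂ) else 0) = 0 :=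
        Finset.prod_eq_zero (Finset.mem_univ k) (if_neg hk)
      rw [hz, mul_zero]
    · intro h; exact absurd (Finset.mem_univ _) h
  · rw [key, epsQ_id, mul_one]
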